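/- arXiv:1508.02268 — 2 statements merged into one kernel-verified Lean document; each statement's English description precedes it below -/
import Mathlib

section
/- For any real number x, ∫₀^∞ (2πλ)^{-1/2} exp(-(λ + x)²/(2λ)) dλ = exp(-2·max(0, x)). -/
open Real MeasureTheory Set

lemma glasser (b : ℝ) (hb : 0 ≤ b) :
    ∫ u in Set.Ioi (0:ℝ), Real.exp (-(u - b/u)^2 / 2) = Real.sqrt (2*Real.pi) / 2 := by
  rcases hb.eq_or_lt with rfl | hb
  · have h1 : ∀ u ∈ Set.Ioi (0:ℝ), Real.exp (-(u - 0/u)^2/2) = Real.exp (-(1/2) * u^2) :=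
      fun u _ => by congr 1; ring
    rw [setIntegral_congr_fun measurableSet_Ioi h1, integral_gaussian_Ioi]
    congr 2
    rw [show Real.pi / (1/2 : ℝ) = 2 * Real.pi by ring]
  · have hb0 : b ≠ 0 := hb.ne'
    set g : ℝ → ℝ := fun u => u - b / u with hg
    set f : ℝ → ℝ := fun u => Real.exp (-(u - b/u)^2 / 2) with hf
    have hg' : ∀ u ∈ Set.Ioi (0:ℝ), HasDerivWithinAt g (1 + b/u^2) (Set.Ioi 0) u := by
      intro u hu
      have hu' : (u:ℝ) ≠ 0 := ne_of_gt hu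
      have h1 : HasDerivAt (fun y : ℝ => y - b * y⁻¹) (1 - b * (-(u^2)⁻¹)) u :=
        (hasDerivAt_id u).sub ((hasDerivAt_inv hu').const_mul b)
      have e1 : (fun y : ℝ => y - b * y⁻¹) = g := by
        funext y; show y - b * y⁻¹ = y - b / y; rw [div_eq_mul_inv]
      have e2 : (1:ℝ) - b * (-(u^2)⁻¹) = 1 + b/u^2 := by field_simp; ring
      rw [e1, e2] at h1
      exact h1.hasDerivWithinAt
    have hmono : StrictMonoOn g (Set.Ioi 0) := by
      intro u hu w hw huw
      have h1 : b / w < b / u :=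
        div_lt_div_of_pos_left hb (by exact hu) huw
      exact sub_lt_sub huw h1
    have hinj : Set.InjOn g (Set.Ioi 0) := hmono.injOn
    have himg : g '' Set.Ioi 0 = Set.univ := by
      ext v
      simp only [Set.mem_univ, iff_true]
      set s := Real.sqrt (v^2 + 4*b) with hs
      have hsk : s^2 = v^2 + 4*b := Real.sq_sqrt (by nlinarith)
      have hvs : |v| < s := by
        rw [← Real.sqrt_sq_eq_abs]
        exact Real.sqrt_lt_sqrt (sq_nonneg v) (by linarith)
      have hvpos : 0 < v + s := by have := neg_abs_le v; linarith
      have hupos : 0 < (v + s) / 2 := by linarith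
      refine ⟨(v + s)/2, hupos, ?_⟩
      have hne : v + s ≠ 0 := ne_of_gt hvpos
      show (v+s)/2 - b / ((v+s)/2) = v
      field_simp
      nlinarith [hsk]
    -- substitution v = g u
    have key1 : Real.sqrt (2*Real.pi) = ∫ u in Set.Ioi (0:ℝ), |1 + b/u^2| * f u := by
      have h := integral_image_eq_integral_abs_deriv_smul measurableSet_Ioi hg' hinj
        (fun v => Real.exp (-v^2/2))
      rw [himg, Measure.restrict_univ] at h
      have hgauss : ∫ v : ℝ, Real.exp (-v^2/2) = Real.sqrt (2*Real.pi) := by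
        have h1 : ∀ v : ℝ, Real.exp (-v^2/2) = Real.exp (-(1/2) * v^2) := by
          intro v; congr 1; ring
        simp only [h1, integral_gaussian]
        rw [show Real.pi / (1/2 : ℝ) = 2 * Real.pi by ring]
      rw [← hgauss, h]
      rfl
    -- integrability
    have hInt : IntegrableOn (fun u => |1 + b/u^2| * f u) (Set.Ioi 0) := by
      have h := (integrableOn_image_iff_integrableOn_abs_deriv_smul measurableSet_Ioi hg' hinj
        (fun v => Real.exp (-v^2/2))).mp ?_
      · exact h
      · rw [himg, integrableOn_univ]
        have h1 : ∀ v : ℝ, Real.exp (-v^2/2) = Real.exp (-(1/2) * v^2) := by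
          intro v; congr 1; ring
        simp only [h1]
        exact integrable_exp_neg_mul_sq (by norm_num)
    have hfmeas : Measurable f := by
      apply Measurable.exp
      apply Measurable.div _ measurable_const
      apply Measurable.neg
      apply Measurable.pow _ measurable_const
      exact (measurable_id.sub (measurable_const.div measurable_id))
    have hfInt : IntegrableOn f (Set.Ioi 0) := by
      refine Integrable.mono' hInt (hfmeas.aestronglyMeasurable.restrict) ?_
      filter_upwards [ae_restrict_mem measurableSet_Ioi] with u hu
      have hu' : (0:ℝ) < u := hu
      have h1 : (1:ℝ) ≤ |1 + b/u^2| := by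
        rw [abs_of_pos (by positivity)]
        have : 0 < b / u^2 := by positivity
        linarith
      have h2 : 0 < f u := Real.exp_pos _
      calc ‖f u‖ = f u := by rw [Real.norm_eq_abs, abs_of_pos h2]
        _ ≤ |1 + b/u^2| * f u := le_mul_of_one_le_left h2.le h1
    have h2Int : IntegrableOn (fun u => (b/u^2) * f u) (Set.Ioi 0) := by
      apply IntegrableOn.congr_fun (hInt.sub hfInt) _ measurableSet_Ioi
      intro u hu
      have hu' : (0:ℝ) < u := hu
      simp only [Pi.sub_apply]
      rw [abs_of_pos (by positivity : (0:ℝ) < 1 + b/u^2)]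
      ring
    -- substitution u ↦ b/u
    have key2 : ∫ u in Set.Ioi (0:ℝ), f u = ∫ u in Set.Ioi (0:ℝ), (b/u^2) * f u := by
      have hψ' : ∀ u ∈ Set.Ioi (0:ℝ),
          HasDerivWithinAt (fun u : ℝ => b / u) (-b/u^2) (Set.Ioi 0) u := by
        intro u hu
        have hu' : (u:ℝ) ≠ 0 := ne_of_gt hu
        have h1 : HasDerivAt (fun y : ℝ => b * y⁻¹) (b * (-(u^2)⁻¹)) u :=
          (hasDerivAt_inv hu').const_mul b
        have e1 : (fun y : ℝ => b * y⁻¹) = (fun u : ℝ => b / u) := by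
          funext y; show b * y⁻¹ = b / y; rw [div_eq_mul_inv]
        have e2 : b * (-(u^2)⁻¹) = -b/u^2 := by field_simp
        rw [e1, e2] at h1
        exact h1.hasDerivWithinAt
      have hψinj : Set.InjOn (fun u : ℝ => b / u) (Set.Ioi 0) := by
        intro u hu w hw h
        have hu0 : (u:ℝ) ≠ 0 := ne_of_gt hu
        have hw0 : (w:ℝ) ≠ 0 := ne_of_gt hw
        have h1 : b / (b / u) = b / (b / w) := by simp only [h]
        have e1 : b / (b/u) = u := by field_simp
        have e2 : b / (b/w) = w := by field_simp
        rw [e1, e2] at h1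
        exact h1
      have hψimg : (fun u : ℝ => b / u) '' Set.Ioi 0 = Set.Ioi 0 := by
        ext v
        constructor
        · rintro ⟨u, hu, rfl⟩
          exact div_pos hb hu
        · intro hv
          exact ⟨b / v, div_pos hb hv, by field_simp⟩
      have h := integral_image_eq_integral_abs_deriv_smul measurableSet_Ioi hψ' hψinj f
      rw [hψimg] at h
      rw [h]
      apply setIntegral_congr_fun measurableSet_Ioi
      intro u hu
      have hu' : (0:ℝ) < u := hu
      have hu0 : (u:ℝ) ≠ 0 := ne_of_gt hu'
      have h1 : |(-b/u^2)| = b/u^2 := by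
        rw [neg_div, abs_neg, abs_of_pos (by positivity)]
      have hbu : b / (b / u) = u := by field_simp
      have h2 : f (b / u) = f u := by
        simp only [hf]
        congr 1
        rw [hbu]
        ring
      simp only [smul_eq_mul, h1, h2]
    -- combine
    have hsum : ∫ u in Set.Ioi (0:ℝ), |1 + b/u^2| * f u
        = (∫ u in Set.Ioi (0:ℝ), f u) + ∫ u in Set.Ioi (0:ℝ), (b/u^2) * f u := by
      rw [← integral_add hfInt h2Int]
      apply setIntegral_congr_fun measurableSet_Ioi
      intro u hu
      have hu' : (0:ℝ) < u := hu
      show |1 + b/u^2| * f u = f u + (b/u^2) * f u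
      rw [abs_of_pos (by positivity : (0:ℝ) < 1 + b/u^2)]
      ring
    rw [hsum, ← key2] at key1
    linarith

/-- Data augmentation (scale mixture of Gaussians) identity for the hinge loss:
for any real `x`, `∫₀^∞ (2πλ)^(-1/2) exp(-(λ + x)²/(2λ)) dλ = exp(-2 max(0, x))`. -/
theorem hinge_scale_mixture_identity (x : ℝ) :
    ∫ l in Set.Ioi (0 : ℝ),
        (1 / Real.sqrt (2 * Real.pi * l)) * Real.exp (-(l + x) ^ 2 / (2 * l)) =
      Real.exp (-2 * max 0 x) := by
  have hφ' : ∀ u ∈ Set.Ioi (0:ℝ), HasDerivWithinAt (fun u : ℝ => u^2) (2*u) (Set.Ioi 0) u := by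
    intro u _
    simpa using (hasDerivAt_pow 2 u).hasDerivWithinAt
  have hφinj : Set.InjOn (fun u : ℝ => u^2) (Set.Ioi 0) := by
    intro u hu w hw h
    have h2 := congrArg Real.sqrt h
    rwa [Real.sqrt_sq (le_of_lt hu), Real.sqrt_sq (le_of_lt hw)] at h2
  have hφimg : (fun u : ℝ => u^2) '' Set.Ioi 0 = Set.Ioi 0 := by
    ext y
    constructor
    · rintro ⟨u, hu, rfl⟩
      exact pow_pos (Set.mem_Ioi.mp hu) 2
    · intro hy
      exact ⟨Real.sqrt y, Real.sqrt_pos.mpr hy, Real.sq_sqrt hy.le⟩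
  have h := integral_image_eq_integral_abs_deriv_smul measurableSet_Ioi hφ' hφinj
    (fun l => (1 / Real.sqrt (2*Real.pi*l)) * Real.exp (-(l + x)^2 / (2*l)))
  rw [hφimg] at h
  rw [h]
  have hsq2π : (0:ℝ) < Real.sqrt (2*Real.pi) := Real.sqrt_pos.mpr (by positivity)
  have hpt : ∀ u ∈ Set.Ioi (0:ℝ),
      |2*u| • ((1 / Real.sqrt (2*Real.pi*u^2)) * Real.exp (-(u^2 + x)^2 / (2*u^2)))
      = (2 / Real.sqrt (2*Real.pi) * Real.exp (-2 * max 0 x)) *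
          Real.exp (-(u - |x|/u)^2/2) := by
    intro u hu
    have hu' : (0:ℝ) < u := hu
    have hu0 : (u:ℝ) ≠ 0 := ne_of_gt hu'
    have e1 : Real.sqrt (2*Real.pi*u^2) = Real.sqrt (2*Real.pi) * u := by
      rw [Real.sqrt_mul (by positivity) (u^2), Real.sqrt_sq hu'.le]
    have e2 : -(u^2 + x)^2 / (2*u^2) = -2 * max 0 x + (-(u - |x|/u)^2/2) := by
      rcases le_or_gt 0 x with hx | hx
      · rw [max_eq_right hx, abs_of_nonneg hx]
        field_simp
        ring
      · rw [max_eq_left hx.le, abs_of_neg hx]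
        field_simp
        ring
    rw [smul_eq_mul, e1, e2, Real.exp_add, abs_of_pos (by positivity : (0:ℝ) < 2*u)]
    field_simp
  rw [setIntegral_congr_fun measurableSet_Ioi hpt, integral_const_mul,
    glasser |x| (abs_nonneg x)]
  field_simp
end

section
/- Fix c > 0, γₙ > 0, δₙ > 0, responses yₙ ∈ ℝ, ε ≥ 0, and random vectors x̃ₙ. Writing Δₙ = yₙ - wᵀx̃ₙ, the function w ↦ (c²/2)·Σₙ E[γₙ(Δₙ - ε)² + δₙ(Δₙ + ε)²] equals (c²/2)·Σₙ (γₙ + δₙ)·E[(wᵀx̃ₙ - yₙ^ε)²] plus a constant independent of w, where yₙ^ε = yₙ + ((δₙ - γₙ)/(δₙ + γₙ))·ε. -/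
open MeasureTheory

/-- Lemma 2 (M-step for dropout support vector regression): with fixed
re-weights `γₙ, δₙ > 0`, responses `yₙ ∈ ℝ`, `ε ≥ 0` and
`Δₙ = yₙ - wᵀx̃ₙ`, the objective
`w ↦ (c²/2) Σₙ E[γₙ(Δₙ - ε)² + δₙ(Δₙ + ε)²]` equals
`(c²/2) Σₙ (γₙ + δₙ) E[(wᵀx̃ₙ - yₙ^ε)²]` plus a constant independent of `w`,
where `yₙ^ε = yₙ + ((δₙ - γₙ)/(δₙ + γₙ)) ε`. -/
theorem dropout_svr_mstep_reweighted_quadratic {Ω : Type*} [MeasurableSpace Ω]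
    (μ : Measure Ω) [IsProbabilityMeasure μ] (D N : ℕ)
    (X : Fin N → Fin D → Ω → ℝ) (γ δ : Fin N → ℝ) (y : Fin N → ℝ)
    (c ε : ℝ) (hc : 0 < c) (hγ : ∀ n, 0 < γ n) (hδ : ∀ n, 0 < δ n)
    (hε : 0 ≤ ε)
    (hL2 : ∀ n d, MemLp (X n d) 2 μ) :
    ∃ C : ℝ, ∀ w : Fin D → ℝ,
      c ^ 2 / 2 * (∑ n, ∫ ω,
          (γ n * ((y n - ∑ d, w d * X n d ω) - ε) ^ 2
            + δ n * ((y n - ∑ d, w d * X n d ω) + ε) ^ 2) ∂μ)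
        = c ^ 2 / 2 * ∑ n, (γ n + δ n) *
            ∫ ω, ((∑ d, w d * X n d ω)
              - (y n + (δ n - γ n) / (δ n + γ n) * ε)) ^ 2 ∂μ
          + C := by
  refine ⟨c ^ 2 / 2 * ∑ n, 4 * γ n * δ n * ε ^ 2 / (δ n + γ n), fun w => ?_⟩
  have key : ∀ n : Fin N,
      (∫ ω, (γ n * ((y n - ∑ d, w d * X n d ω) - ε) ^ 2
            + δ n * ((y n - ∑ d, w d * X n d ω) + ε) ^ 2) ∂μ)
        = (γ n + δ n) *
            (∫ ω, ((∑ d, w d * X n d ω)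
              - (y n + (δ n - γ n) / (δ n + γ n) * ε)) ^ 2 ∂μ)
          + 4 * γ n * δ n * ε ^ 2 / (δ n + γ n) := by
    intro n
    have h1 := hγ n
    have h2 := hδ n
    have hne : δ n + γ n ≠ 0 := by positivity
    have hS : MemLp (fun ω => ∑ d, w d * X n d ω) 2 μ := by
      exact memLp_finset_sum Finset.univ (fun d _ => (hL2 n d).const_mul (w d))
    have hS2 : MemLp (fun ω => (∑ d, w d * X n d ω)
        - (y n + (δ n - γ n) / (δ n + γ n) * ε)) 2 μ :=
      hS.sub (memLp_const _)
    have hint : Integrable (fun ω => ((∑ d, w d * X n d ω)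
        - (y n + (δ n - γ n) / (δ n + γ n) * ε)) ^ 2) μ := by
      have := hS2.integrable_sq
      simpa [sq] using this
    have hcongr : (∫ ω, (γ n * ((y n - ∑ d, w d * X n d ω) - ε) ^ 2
            + δ n * ((y n - ∑ d, w d * X n d ω) + ε) ^ 2) ∂μ)
        = ∫ ω, ((γ n + δ n) * ((∑ d, w d * X n d ω)
              - (y n + (δ n - γ n) / (δ n + γ n) * ε)) ^ 2
            + 4 * γ n * δ n * ε ^ 2 / (δ n + γ n)) ∂μ := by
      refine integral_congr_ae (Filter.Eventually.of_forall fun ω => ?_)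
      field_simp
      ring
    rw [hcongr, integral_add (hint.const_mul _) (integrable_const _),
      integral_const_mul, integral_const]
    simp
  simp only [key, Finset.sum_add_distrib, mul_add]
end
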